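/- arXiv:2603.29053 — 3 statements merged into one kernel-verified Lean document; each statement's English description precedes it below -/
import Mathlib

section
/- Let 𝒜 be an abelian category and Z a stability function on 𝒜 with the Harder–Narasimhan property. Let X be a nonzero object of 𝒜 that is not semistable, with Harder–Narasimhan filtration 0 = X₀ ⊂ X₁ ⊂ … ⊂ Xₙ = X (so n ≥ 2); set D := Xₙ₋₁ and let Q := X/Xₙ₋₁ be the minimal destabilizing quotient of X (Q is semistable and its slope is strictly smaller than the slope of every other HN factor of X). Let X′ be an object of 𝒜 fitting into a short exact sequence 0 → Q → X′ → D → 0. If HNP(X′) = HNP(X), then this short exact sequence splits, i.e. X′ ≅ Q ⊕ D. -/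
open CategoryTheory CategoryTheory.Limits

universe v u

namespace StabNL

variable {𝒜 : Type u} [Category.{v} 𝒜] [Abelian 𝒜]

noncomputable def muSlope (Z : 𝒜 → ℂ) (E : 𝒜) : EReal :=
  if (Z E).im = 0 then ⊤ else ((-(Z E).re / (Z E).im : ℝ) : EReal)

structure IsStabilityFunction (Z : 𝒜 → ℂ) : Prop where
  map_zero : ∀ E : 𝒜, IsZero E → Z E = 0
  additive : ∀ S : ShortComplex 𝒜, S.ShortExact → Z S.X₂ = Z S.X₁ + Z S.X₃
  im_nonneg : ∀ E : 𝒜, ¬ IsZero E → 0 ≤ (Z E).im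
  re_neg_of_im_zero : ∀ E : 𝒜, ¬ IsZero E → (Z E).im = 0 → (Z E).re < 0

def Semistable (Z : 𝒜 → ℂ) (E : 𝒜) : Prop :=
  ¬ IsZero E ∧ ∀ F : Subobject E, ¬ IsZero (F : 𝒜) → muSlope Z (F : 𝒜) ≤ muSlope Z E

structure HNFiltration (Z : 𝒜 → ℂ) (E : 𝒜) where
  n : ℕ
  npos : 0 < n
  obj : Fin (n + 1) → 𝒜
  zero : IsZero (obj 0)
  top : obj (Fin.last n) ≅ E
  f : ∀ i : Fin n, obj i.castSucc ⟶ obj i.succ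
  mono : ∀ i : Fin n, Mono (f i)
  semistable_factor : ∀ i : Fin n, Semistable Z (cokernel (f i))
  slope_strict_anti : ∀ i j : Fin n, i < j →
    muSlope Z (cokernel (f j)) < muSlope Z (cokernel (f i))

noncomputable def HNP (Z : 𝒜 → ℂ) (E : 𝒜) : Set ℂ :=
  convexHull ℝ {z : ℂ | ∃ F : Subobject E, muSlope Z E < muSlope Z (F : 𝒜) ∧ z = Z (F : 𝒜)}

/-! ### Auxiliary lemmas -/

/-- The linear functional `z ↦ -re z - s * im z`. -/
noncomputable def phi (s : ℝ) : ℂ →ₗ[ℝ] ℝ := -(Complex.reLm) - s • Complex.imLm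

lemma phi_apply (s : ℝ) (z : ℂ) : phi s z = -z.re - s * z.im := by simp [phi]

lemma eq_zero_of_phi (s₁ s₂ : ℝ) (h : s₁ ≠ s₂) (z : ℂ)
    (h1 : phi s₁ z = 0) (h2 : phi s₂ z = 0) : z = 0 := by
  rw [phi_apply] at h1 h2
  have him : z.im = 0 := by
    have : (s₂ - s₁) * z.im = 0 := by linarith
    rcases mul_eq_zero.1 this with hc | hc
    · exact absurd (by linarith : s₁ = s₂) h
    · exact hc
  have hre : z.re = 0 := by rw [him] at h1; linarith
  exact Complex.ext hre him

section Z

variable {Z : 𝒜 → ℂ} (hZ : IsStabilityFunction Z)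
include hZ

lemma shortExact_mk_mono {A B : 𝒜} (u : A ⟶ B) [Mono u] :
    (ShortComplex.mk u (cokernel.π u) (cokernel.condition u)).ShortExact :=
  ⟨ShortComplex.exact_of_g_is_cokernel _ (cokernelIsCokernel u)⟩

omit hZ in
lemma shortExact_mk_mono' {A B : 𝒜} (u : A ⟶ B) [Mono u] :
    (ShortComplex.mk u (cokernel.π u) (cokernel.condition u)).ShortExact :=
  ⟨ShortComplex.exact_of_g_is_cokernel _ (cokernelIsCokernel u)⟩

lemma Z_add_of_mono {A B : 𝒜} (u : A ⟶ B) [Mono u] :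
    Z B = Z A + Z (cokernel u) :=
  hZ.additive _ (shortExact_mk_mono' u)

lemma Z_iso {A B : 𝒜} (e : A ≅ B) : Z A = Z B := by
  have h := Z_add_of_mono hZ e.hom
  have hz : IsZero (cokernel e.hom) :=
    (isZero_zero 𝒜).of_iso (cokernel.ofEpi e.hom)
  rw [hZ.map_zero _ hz, add_zero] at h
  exact h.symm

omit hZ in
lemma muSlope_congr {A B : 𝒜} (h : Z A = Z B) : muSlope Z A = muSlope Z B := by
  simp only [muSlope, h]

lemma Z_ne_zero {E : 𝒜} (hE : ¬ IsZero E) : Z E ≠ 0 := by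
  intro h
  by_cases him : (Z E).im = 0
  · have := hZ.re_neg_of_im_zero E hE him
    rw [h] at this; simp at this
  · rw [h] at him; simp at him

lemma isZero_of_Z_eq_zero {E : 𝒜} (h : Z E = 0) : IsZero E := by
  by_contra hE
  exact Z_ne_zero hZ hE h

lemma im_pos_of_slope_ne_top {E : 𝒜} (hE : ¬ IsZero E)
    (h : muSlope Z E ≠ ⊤) : 0 < (Z E).im := by
  rcases lt_or_eq_of_le (hZ.im_nonneg E hE) with h' | h'
  · exact h'
  · exact absurd (by simp [muSlope, ← h']) h

omit hZ in
lemma muSlope_eq_coe {E : 𝒜} (h : (Z E).im ≠ 0) :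
    muSlope Z E = ((-(Z E).re / (Z E).im : ℝ) : EReal) := by
  simp [muSlope, h]

lemma phi_nonneg_of_le_slope {E : 𝒜} (hE : ¬ IsZero E) {s : ℝ}
    (hs : (s : EReal) ≤ muSlope Z E) : 0 ≤ phi s (Z E) := by
  rw [phi_apply]
  by_cases him : (Z E).im = 0
  · have := hZ.re_neg_of_im_zero E hE him
    rw [him]; nlinarith
  · have him' : 0 < (Z E).im := lt_of_le_of_ne (hZ.im_nonneg E hE) (Ne.symm him)
    rw [muSlope_eq_coe him, EReal.coe_le_coe_iff] at hs
    rw [le_div_iff₀ him'] at hs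
    linarith

lemma phi_nonpos_of_slope_le {E : 𝒜} {s : ℝ}
    (hs : muSlope Z E ≤ (s : EReal)) : phi s (Z E) ≤ 0 := by
  by_cases hE : IsZero E
  · rw [hZ.map_zero E hE]; simp
  by_cases him : (Z E).im = 0
  · exfalso
    rw [muSlope, if_pos him, top_le_iff] at hs
    exact EReal.coe_ne_top s hs
  · have him' : 0 < (Z E).im := lt_of_le_of_ne (hZ.im_nonneg E hE) (Ne.symm him)
    rw [muSlope_eq_coe him, EReal.coe_le_coe_iff, div_le_iff₀ him'] at hs
    rw [phi_apply]; linarith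

lemma slope_le_of_mono {A E : 𝒜} (hE : Semistable Z E) (m : A ⟶ E) [Mono m]
    (hA : ¬ IsZero A) : muSlope Z A ≤ muSlope Z E := by
  have hiso : ((Subobject.mk m : Subobject E) : 𝒜) ≅ A := Subobject.underlyingIso m
  have hnz : ¬ IsZero ((Subobject.mk m : Subobject E) : 𝒜) := fun h => hA (h.of_iso hiso.symm)
  have := hE.2 (Subobject.mk m) hnz
  rwa [muSlope_congr (Z_iso hZ hiso)] at this

/-- quotient of a semistable object bound: for `G ↪ A` with `A` semistable and
`s ≤ μ(A)`, one has `φₛ(Z G) ≤ φₛ(Z A)`. -/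
lemma phi_le_of_mono_semistable {G A : 𝒜} (hA : Semistable Z A) (m : G ⟶ A) [Mono m]
    {s : ℝ} (hs : (s : EReal) ≤ muSlope Z A) : phi s (Z G) ≤ phi s (Z A) := by
  have hadd : Z A = Z G + Z (cokernel m) := Z_add_of_mono hZ m
  have key : 0 ≤ phi s (Z (cokernel m)) := by
    by_cases hC : IsZero (cokernel m)
    · rw [hZ.map_zero _ hC]; simp
    refine phi_nonneg_of_le_slope hZ hC ?_
    by_cases himC : (Z (cokernel m)).im = 0
    · rw [muSlope, if_pos himC]; exact le_top
    have himC' : 0 < (Z (cokernel m)).im :=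
      lt_of_le_of_ne (hZ.im_nonneg _ hC) (Ne.symm himC)
    by_cases hG : IsZero G
    · have : Z (cokernel m) = Z A := by rw [hadd, hZ.map_zero _ hG, zero_add]
      rwa [muSlope_congr this]
    -- G and cokernel m both nonzero
    have himA : 0 < (Z A).im := by
      have h1 : 0 ≤ (Z G).im := hZ.im_nonneg _ hG
      have : (Z A).im = (Z G).im + (Z (cokernel m)).im := by rw [hadd]; simp
      linarith
    have hsA : s ≤ -(Z A).re / (Z A).im := by
      rw [muSlope_eq_coe (ne_of_gt himA), EReal.coe_le_coe_iff] at hs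
      exact hs
    have hGA : muSlope Z G ≤ muSlope Z A := slope_le_of_mono hZ hA m hG
    have himG : 0 < (Z G).im := by
      rcases lt_or_eq_of_le (hZ.im_nonneg _ hG) with h' | h'
      · exact h'
      · exfalso
        rw [muSlope, if_pos h'.symm, top_le_iff, muSlope_eq_coe (ne_of_gt himA)] at hGA
        exact EReal.coe_ne_top _ hGA
    rw [muSlope_eq_coe (ne_of_gt himG), muSlope_eq_coe (ne_of_gt himA),
      EReal.coe_le_coe_iff, div_le_div_iff₀ himG himA] at hGA
    rw [muSlope_eq_coe (ne_of_gt himC'), EReal.coe_le_coe_iff, le_div_iff₀ himC']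
    have hre : (Z A).re = (Z G).re + (Z (cokernel m)).re := by rw [hadd]; simp
    have him : (Z A).im = (Z G).im + (Z (cokernel m)).im := by rw [hadd]; simp
    rw [le_div_iff₀ himA] at hsA
    have h1 : 0 ≤ (-(Z A).re - s * (Z A).im) * (Z (cokernel m)).im :=
      mul_nonneg (by linarith) himC'.le
    have h2 : 0 ≤ (Z G).re * (Z A).im - (Z A).re * (Z G).im := by linarith
    have h3 : (-(Z (cokernel m)).re - s * (Z (cokernel m)).im) * (Z A).im =
        (-(Z A).re - s * (Z A).im) * (Z (cokernel m)).im +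
          ((Z G).re * (Z A).im - (Z A).re * (Z G).im) := by
      rw [hre, him]; ring
    have h4 : 0 * (Z A).im ≤ (-(Z (cokernel m)).re - s * (Z (cokernel m)).im) * (Z A).im := by
      rw [h3]; linarith
    have h5 : (0:ℝ) ≤ -(Z (cokernel m)).re - s * (Z (cokernel m)).im :=
      le_of_mul_le_mul_right h4 himA
    linarith
  have : phi s (Z A) = phi s (Z G) + phi s (Z (cokernel m)) := by
    rw [hadd, map_add]
  linarith

/-- One-step dévissage: if `φₛ`-bound holds for subobjects of `E'` and `E/E' = cokernel u`
is semistable of slope `≥ s`, it holds for subobjects of `E`. -/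
lemma phi_step {E' E : 𝒜} (u : E' ⟶ E) [Mono u]
    (hA : Semistable Z (cokernel u)) {s : ℝ} (hsA : (s : EReal) ≤ muSlope Z (cokernel u))
    (ih : ∀ (K : 𝒜) (t : K ⟶ E'), Mono t → phi s (Z K) ≤ phi s (Z E'))
    (G : 𝒜) (g : G ⟶ E) (hg : Mono g) : phi s (Z G) ≤ phi s (Z E) := by
  haveI := hg
  set ψ : G ⟶ cokernel u := g ≫ cokernel.π u with hψ
  -- decompose G
  have hG : Z G = Z (kernel ψ) + Z (cokernel (kernel.ι ψ)) := Z_add_of_mono hZ (kernel.ι ψ)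
  -- the coimage of ψ embeds into cokernel u
  have hmb : Mono ((Abelian.coimageIsoImage' ψ).hom ≫ image.ι ψ) := mono_comp _ _
  have h1 : phi s (Z (cokernel (kernel.ι ψ))) ≤ phi s (Z (cokernel u)) := by
    haveI := hmb
    exact phi_le_of_mono_semistable hZ hA ((Abelian.coimageIsoImage' ψ).hom ≫ image.ι ψ) hsA
  -- the kernel of ψ embeds into E'
  have hker : (kernel.ι ψ ≫ g) ≫ cokernel.π u = 0 := by
    rw [Category.assoc, ← hψ, kernel.condition]
  obtain ⟨t, ht⟩ := KernelFork.IsLimit.lift' (shortExact_mk_mono' u).fIsKernel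
    (kernel.ι ψ ≫ g) hker
  have ht' : t ≫ u = kernel.ι ψ ≫ g := ht
  have htm : Mono t := by
    have : Mono (t ≫ u) := by rw [ht']; exact mono_comp _ _
    exact mono_of_mono t u
  have h2 : phi s (Z (kernel ψ)) ≤ phi s (Z E') := ih _ t htm
  have hE : Z E = Z E' + Z (cokernel u) := Z_add_of_mono hZ u
  have : phi s (Z G) = phi s (Z (kernel ψ)) + phi s (Z (cokernel (kernel.ι ψ))) := by
    rw [hG, map_add]
  have hE' : phi s (Z E) = phi s (Z E') + phi s (Z (cokernel u)) := by
    rw [hE, map_add]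
  linarith

/-- The polygon bound along the filtration: any subobject `G ↪ Xₘ` satisfies
`φₛ(Z G) ≤ φₛ(Z Xₘ)` provided `s ≤ μ(Aₖ)` for all `k < m`. -/
lemma lemmaA {X : 𝒜} (F : HNFiltration Z X) (s : ℝ) :
    ∀ (m : ℕ) (hm : m < F.n + 1),
      (∀ k : Fin F.n, (k : ℕ) < m → (s : EReal) ≤ muSlope Z (cokernel (F.f k))) →
      ∀ (G : 𝒜) (g : G ⟶ F.obj ⟨m, hm⟩), Mono g → phi s (Z G) ≤ phi s (Z (F.obj ⟨m, hm⟩)) := by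
  intro m
  induction m with
  | zero =>
    intro hm _ G g hg
    have h0 : (⟨0, hm⟩ : Fin (F.n + 1)) = 0 := by ext; simp
    have hz : IsZero (F.obj ⟨0, hm⟩) := by rw [h0]; exact F.zero
    haveI := hg
    have hzG : IsZero G := IsZero.of_mono g hz
    rw [hZ.map_zero _ hz, hZ.map_zero _ hzG]
  | succ m ih =>
    intro hm hs G g hg
    have hmn : m < F.n := by omega
    have hcast : (Fin.castSucc ⟨m, hmn⟩ : Fin (F.n + 1)) = ⟨m, by omega⟩ := rfl
    have hsucc : (Fin.succ ⟨m, hmn⟩ : Fin (F.n + 1)) = ⟨m + 1, hm⟩ := rfl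
    haveI := F.mono ⟨m, hmn⟩
    refine phi_step hZ (F.f ⟨m, hmn⟩) (F.semistable_factor _) (hs ⟨m, hmn⟩ (by simp)) ?_ G g hg
    intro K t ht
    exact ih (by omega) (fun k hk => hs k (by omega)) K t ht

/-- Arithmetic for `μ(X) < μ(D)`. -/
lemma muXD_aux {X D Q : 𝒜} (hZX : Z X = Z D + Z Q) (himQ : 0 < (Z Q).im)
    (himD : 0 < (Z D).im) (himX : 0 < (Z X).im) {s : ℝ}
    (hphiD : 0 ≤ phi s (Z D)) (hsa : -(Z Q).re / (Z Q).im < s) :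
    muSlope Z X < muSlope Z D := by
  rw [muSlope_eq_coe (ne_of_gt himX), muSlope_eq_coe (ne_of_gt himD),
    EReal.coe_lt_coe_iff, div_lt_div_iff₀ himX himD]
  have hre : (Z X).re = (Z D).re + (Z Q).re := by rw [hZX]; simp
  have him : (Z X).im = (Z D).im + (Z Q).im := by rw [hZX]; simp
  have h1 : -(Z Q).re < s * (Z Q).im := by
    have := (div_lt_iff₀ himQ).1 hsa
    linarith
  have h2 : s * (Z D).im ≤ -(Z D).re := by
    rw [phi_apply] at hphiD
    linarith
  have h3 : -(Z Q).re * (Z D).im < s * (Z Q).im * (Z D).im :=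
    mul_lt_mul_of_pos_right h1 himD
  have h4 : s * (Z D).im * (Z Q).im ≤ -(Z D).re * (Z Q).im :=
    mul_le_mul_of_nonneg_right h2 himQ.le
  rw [hre, him]
  nlinarith [h3, h4]

/-- Bound for subobjects of `X'`:  `φₛ(Z G) ≤ φₛ(Z D)` once `μ(Q) ≤ s ≤ μ(Aₖ)` for `k < i`.
This version separates the two contributions (kernel and coimage). -/
lemma lemmaB_parts {X : 𝒜} (F : HNFiltration Z X) (i : Fin F.n)
    {X' : 𝒜} (q : cokernel (F.f i) ⟶ X') (p : X' ⟶ F.obj i.castSucc)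
    (w : q ≫ p = 0) (hse : (ShortComplex.mk q p w).ShortExact)
    {s : ℝ} (hs1 : muSlope Z (cokernel (F.f i)) ≤ (s : EReal))
    (hs2 : ∀ k : Fin F.n, (k : ℕ) < (i : ℕ) → (s : EReal) ≤ muSlope Z (cokernel (F.f k)))
    (G : 𝒜) (g : G ⟶ X') (hg : Mono g) :
    phi s (Z (kernel (g ≫ p))) ≤ 0 ∧
      phi s (Z (cokernel (kernel.ι (g ≫ p)))) ≤ phi s (Z (F.obj i.castSucc)) ∧
      Z G = Z (kernel (g ≫ p)) + Z (cokernel (kernel.ι (g ≫ p))) := by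
  haveI := hg
  set ψ : G ⟶ F.obj i.castSucc := g ≫ p with hψ
  have hGdec : Z G = Z (kernel ψ) + Z (cokernel (kernel.ι ψ)) := Z_add_of_mono hZ (kernel.ι ψ)
  refine ⟨?_, ?_, hGdec⟩
  · -- kernel part embeds in Q
    by_cases hK : IsZero (kernel ψ)
    · rw [hZ.map_zero _ hK]; simp
    have hker : (kernel.ι ψ ≫ g) ≫ p = 0 := by
      rw [Category.assoc, ← hψ, kernel.condition]
    obtain ⟨t, ht⟩ := KernelFork.IsLimit.lift' hse.fIsKernel (kernel.ι ψ ≫ g) hker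
    have ht' : t ≫ q = kernel.ι ψ ≫ g := ht
    have htm : Mono t := by
      have : Mono (t ≫ q) := by rw [ht']; exact mono_comp _ _
      exact mono_of_mono t q
    haveI := htm
    have hsl : muSlope Z (kernel ψ) ≤ muSlope Z (cokernel (F.f i)) :=
      slope_le_of_mono hZ (F.semistable_factor i) t hK
    exact phi_nonpos_of_slope_le hZ (le_trans hsl hs1)
  · -- coimage part embeds in D
    have hmb : Mono ((Abelian.coimageIsoImage' ψ).hom ≫ image.ι ψ) := mono_comp _ _
    exact lemmaA hZ F s (i : ℕ) (by omega) (fun k hk => hs2 k hk) _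
      ((Abelian.coimageIsoImage' ψ).hom ≫ image.ι ψ) hmb

lemma lemmaB {X : 𝒜} (F : HNFiltration Z X) (i : Fin F.n)
    {X' : 𝒜} (q : cokernel (F.f i) ⟶ X') (p : X' ⟶ F.obj i.castSucc)
    (w : q ≫ p = 0) (hse : (ShortComplex.mk q p w).ShortExact)
    {s : ℝ} (hs1 : muSlope Z (cokernel (F.f i)) ≤ (s : EReal))
    (hs2 : ∀ k : Fin F.n, (k : ℕ) < (i : ℕ) → (s : EReal) ≤ muSlope Z (cokernel (F.f k)))
    (G : 𝒜) (g : G ⟶ X') (hg : Mono g) :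
    phi s (Z G) ≤ phi s (Z (F.obj i.castSucc)) := by
  obtain ⟨h1, h2, h3⟩ := lemmaB_parts hZ F i q p w hse hs1 hs2 G g hg
  have : phi s (Z G) = phi s (Z (kernel (g ≫ p))) + phi s (Z (cokernel (kernel.ι (g ≫ p)))) := by
    rw [h3, map_add]
  linarith

end Z

/-- If the short exact sequence `0 → Q → X' → D → 0` (with `Q` the minimal destabilizing
quotient of `X` and `D = Xₙ₋₁`) satisfies `HNP(X') = HNP(X)`, then it splits,
i.e. `X' ≅ Q ⊕ D`. -/
theorem statement1
    (Z : 𝒜 → ℂ) (hZ : IsStabilityFunction Z)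
    (hHN : ∀ E : 𝒜, ¬ IsZero E → Nonempty (HNFiltration Z E))
    (X : 𝒜) (hX : ¬ IsZero X) (hXns : ¬ Semistable Z X)
    (F : HNFiltration Z X) (hn : 2 ≤ F.n)
    (i : Fin F.n) (hi : (i : ℕ) = F.n - 1)
    (X' : 𝒜) (q : cokernel (F.f i) ⟶ X') (p : X' ⟶ F.obj i.castSucc)
    (w : q ≫ p = 0) (hse : (ShortComplex.mk q p w).ShortExact)
    (hpolygon : HNP Z X' = HNP Z X) :
    Nonempty (ShortComplex.mk q p w).Splitting ∧
      Nonempty (X' ≅ cokernel (F.f i) ⊞ F.obj i.castSucc) := by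
  classical
  have hQss : Semistable Z (cokernel (F.f i)) := F.semistable_factor i
  have hQn0 : ¬ IsZero (cokernel (F.f i)) := hQss.1
  -- the previous index, with strictly bigger slope
  have hj₀lt : F.n - 2 < F.n := by omega
  have hj₀i : (⟨F.n - 2, hj₀lt⟩ : Fin F.n) < i := by rw [Fin.lt_def]; simp; omega
  have hab : muSlope Z (cokernel (F.f i)) < muSlope Z (cokernel (F.f ⟨F.n - 2, hj₀lt⟩)) :=
    F.slope_strict_anti _ i hj₀i
  have hbmin : ∀ k : Fin F.n, (k : ℕ) < (i : ℕ) →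
      muSlope Z (cokernel (F.f ⟨F.n - 2, hj₀lt⟩)) ≤ muSlope Z (cokernel (F.f k)) := by
    intro k hk
    rcases eq_or_lt_of_le (show (k : ℕ) ≤ F.n - 2 by omega) with he | hl
    · have : k = ⟨F.n - 2, hj₀lt⟩ := Fin.ext he
      rw [this]
    · exact le_of_lt (F.slope_strict_anti k _ (by rwa [Fin.lt_def]))
  -- μ(Q) is finite
  have hQtop : muSlope Z (cokernel (F.f i)) ≠ ⊤ := by
    intro h
    rw [h] at hab
    exact (not_top_lt) hab
  have himQ : 0 < (Z (cokernel (F.f i))).im := im_pos_of_slope_ne_top hZ hQn0 hQtop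
  have haQ : muSlope Z (cokernel (F.f i)) =
      ((-(Z (cokernel (F.f i))).re / (Z (cokernel (F.f i))).im : ℝ) : EReal) :=
    muSlope_eq_coe (ne_of_gt himQ)
  -- find two "good" slope parameters s₁ < s₂
  obtain ⟨s₁, s₂, hs₁₂, hg₁, hg₂⟩ :
      ∃ s₁ s₂ : ℝ, s₁ ≠ s₂ ∧
        (muSlope Z (cokernel (F.f i)) ≤ (s₁ : EReal) ∧
          ∀ k : Fin F.n, (k : ℕ) < (i : ℕ) → (s₁ : EReal) ≤ muSlope Z (cokernel (F.f k))) ∧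
        (muSlope Z (cokernel (F.f i)) ≤ (s₂ : EReal) ∧
          ∀ k : Fin F.n, (k : ℕ) < (i : ℕ) → (s₂ : EReal) ≤ muSlope Z (cokernel (F.f k))) := by
    set a : ℝ := -(Z (cokernel (F.f i))).re / (Z (cokernel (F.f i))).im with ha
    by_cases hbtop : muSlope Z (cokernel (F.f ⟨F.n - 2, hj₀lt⟩)) = ⊤
    · refine ⟨a, a + 1, by norm_num, ⟨le_of_eq haQ, ?_⟩, ⟨by rw [haQ]; exact_mod_cast (by linarith : a ≤ a + 1), ?_⟩⟩ <;>
      · intro k hk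
        have := hbmin k hk
        rw [hbtop, top_le_iff] at this
        rw [this]
        exact le_top
    · have hbbot : muSlope Z (cokernel (F.f ⟨F.n - 2, hj₀lt⟩)) ≠ ⊥ := by
        intro h
        rw [h] at hab
        exact (not_lt_bot) hab
      set b : ℝ := (muSlope Z (cokernel (F.f ⟨F.n - 2, hj₀lt⟩))).toReal with hbdef
      have hbco : (b : EReal) = muSlope Z (cokernel (F.f ⟨F.n - 2, hj₀lt⟩)) :=
        EReal.coe_toReal hbtop hbbot
      have haltb : a < b := by
        rw [haQ, ← hbco, EReal.coe_lt_coe_iff] at hab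
        exact hab
      refine ⟨a, b, ne_of_lt haltb, ⟨le_of_eq haQ, ?_⟩, ⟨haQ ▸ ?_, ?_⟩⟩
      · intro k hk
        calc (a : EReal) ≤ (b : EReal) := by exact_mod_cast le_of_lt haltb
        _ ≤ _ := hbco ▸ hbmin k hk
      · exact_mod_cast le_of_lt haltb
      · intro k hk
        exact hbco ▸ hbmin k hk
  -- Z X = Z D + Z Q  and  Z X' = Z Q + Z D
  have esucc : i.succ = Fin.last F.n := by
    ext
    simp [Fin.last]
    omega
  haveI := F.mono i
  have hZX : Z X = Z (F.obj i.castSucc) + Z (cokernel (F.f i)) := by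
    calc Z X = Z (F.obj (Fin.last F.n)) := (Z_iso hZ F.top).symm
    _ = Z (F.obj i.succ) := by rw [esucc]
    _ = _ := Z_add_of_mono hZ (F.f i)
  have hZX' : Z X' = Z (cokernel (F.f i)) + Z (F.obj i.castSucc) := hZ.additive _ hse
  -- 0 ≤ φₛ (Z D) for any good s
  have hmono0 : ∀ (Y : 𝒜), Mono (0 : F.obj 0 ⟶ Y) := by
    intro Y
    refine ⟨fun {W} a b _ => ?_⟩
    exact F.zero.eq_of_tgt a b
  have hphiD : ∀ s : ℝ, (∀ k : Fin F.n, (k : ℕ) < (i : ℕ) →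
      (s : EReal) ≤ muSlope Z (cokernel (F.f k))) → 0 ≤ phi s (Z (F.obj i.castSucc)) := by
    intro s hs
    have := lemmaA hZ F s (i : ℕ) (by omega) hs (F.obj 0) 0 (hmono0 _)
    rwa [hZ.map_zero _ F.zero, map_zero] at this
  -- μ X < μ D
  have hmuXD : muSlope Z X < muSlope Z (F.obj i.castSucc) := by
    by_cases himD : (Z (F.obj i.castSucc)).im = 0
    · have hDtop : muSlope Z (F.obj i.castSucc) = ⊤ := by simp [muSlope, himD]
      rw [hDtop, lt_top_iff_ne_top]
      intro htop
      exact hXns ⟨hX, fun Fo _ => htop ▸ le_top⟩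
    · have hDn0 : ¬ IsZero (F.obj i.castSucc) := by
        intro h
        rw [hZ.map_zero _ h] at himD
        simp at himD
      have himD' : 0 < (Z (F.obj i.castSucc)).im :=
        lt_of_le_of_ne (hZ.im_nonneg _ hDn0) (Ne.symm himD)
      have himX : 0 < (Z X).im := by
        have : (Z X).im = (Z (F.obj i.castSucc)).im + (Z (cokernel (F.f i))).im := by
          rw [hZX]; simp
        linarith
      -- choose the larger good parameter
      rcases ne_iff_lt_or_gt.1 hs₁₂ with hlt | hlt
      case _ =>
        exact muXD_aux hZ hZX himQ himD' himX (hphiD s₂ hg₂.2) (lt_of_le_of_lt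
          (by rw [haQ] at hg₁; exact_mod_cast hg₁.1) hlt)
      case _ =>
        exact muXD_aux hZ hZX himQ himD' himX (hphiD s₁ hg₁.2) (lt_of_le_of_lt
          (by rw [haQ] at hg₂; exact_mod_cast hg₂.1) hlt)
  -- Z D belongs to HNP Z X = HNP Z X'
  have hDsub : Z (F.obj i.castSucc) ∈ HNP Z X' := by
    rw [hpolygon]
    refine subset_convexHull ℝ _ ?_
    have hdm : Mono (F.f i ≫ eqToHom (congrArg F.obj esucc) ≫ F.top.hom) := mono_comp _ _
    refine ⟨Subobject.mk (F.f i ≫ eqToHom (congrArg F.obj esucc) ≫ F.top.hom), ?_, ?_⟩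
    · rwa [muSlope_congr (Z_iso hZ (Subobject.underlyingIso _))]
    · exact (Z_iso hZ (Subobject.underlyingIso _)).symm
  -- extract a subobject of X' with Z-value Z D
  rw [HNP, convexHull_eq] at hDsub
  obtain ⟨ι, t, wt, zt, hw0, hw1, hzt, hcm⟩ := hDsub
  rw [Finset.centerMass_eq_of_sum_1 _ _ hw1] at hcm
  have hkey : ∀ s : ℝ, muSlope Z (cokernel (F.f i)) ≤ (s : EReal) →
      (∀ k : Fin F.n, (k : ℕ) < (i : ℕ) → (s : EReal) ≤ muSlope Z (cokernel (F.f k))) →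
      ∀ j ∈ t, wt j ≠ 0 → phi s (zt j) = phi s (Z (F.obj i.castSucc)) := by
    intro s hsa hsb
    have hle : ∀ j ∈ t, phi s (zt j) ≤ phi s (Z (F.obj i.castSucc)) := by
      intro j hj
      obtain ⟨Fo, _, hFo2⟩ := hzt j hj
      rw [hFo2]
      exact lemmaB hZ F i q p w hse hsa hsb _ Fo.arrow inferInstance
    have hsum : ∑ j ∈ t, wt j * (phi s (Z (F.obj i.castSucc)) - phi s (zt j)) = 0 := by
      have h1 : ∑ j ∈ t, wt j * phi s (zt j) = phi s (Z (F.obj i.castSucc)) := by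
        rw [← hcm, map_sum]
        congr 1
        ext j
        rw [map_smul, smul_eq_mul]
      have h2 : ∑ j ∈ t, wt j * phi s (Z (F.obj i.castSucc)) =
          phi s (Z (F.obj i.castSucc)) := by
        rw [← Finset.sum_mul, hw1, one_mul]
      calc ∑ j ∈ t, wt j * (phi s (Z (F.obj i.castSucc)) - phi s (zt j))
          = ∑ j ∈ t, (wt j * phi s (Z (F.obj i.castSucc)) - wt j * phi s (zt j)) :=
            Finset.sum_congr rfl fun j _ => by ring
        _ = (∑ j ∈ t, wt j * phi s (Z (F.obj i.castSucc))) -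
              ∑ j ∈ t, wt j * phi s (zt j) := Finset.sum_sub_distrib _ _
        _ = 0 := by rw [h1, h2, sub_self]
    have hall := (Finset.sum_eq_zero_iff_of_nonneg
      (fun j hj => mul_nonneg (hw0 j hj) (sub_nonneg.2 (hle j hj)))).1 hsum
    intro j hj hwj
    have := hall j hj
    rcases mul_eq_zero.1 this with hc | hc
    · exact absurd hc hwj
    · linarith
  obtain ⟨j, hjt, hjne⟩ := Finset.exists_ne_zero_of_sum_ne_zero
    (show ∑ j ∈ t, wt j ≠ 0 by rw [hw1]; exact one_ne_zero)
  have he₁ := hkey s₁ hg₁.1 hg₁.2 j hjt hjne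
  have he₂ := hkey s₂ hg₂.1 hg₂.2 j hjt hjne
  have hztj : zt j = Z (F.obj i.castSucc) := by
    have hv : Z (F.obj i.castSucc) - zt j = 0 :=
      eq_zero_of_phi s₁ s₂ hs₁₂ _ (by rw [map_sub, he₁, sub_self])
        (by rw [map_sub, he₂, sub_self])
    exact (sub_eq_zero.mp hv).symm
  obtain ⟨Fo, _, hFo2⟩ := hzt j hjt
  have hZFo : Z ((Fo : 𝒜)) = Z (F.obj i.castSucc) := by rw [← hFo2, hztj]
  -- the composite (Fo : 𝒜) ⟶ X' ⟶ D is an isomorphism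
  obtain ⟨hk1, hk2, hk3⟩ := lemmaB_parts hZ F i q p w hse hg₁.1 hg₁.2 _ Fo.arrow inferInstance
  obtain ⟨hl1, hl2, hl3⟩ := lemmaB_parts hZ F i q p w hse hg₂.1 hg₂.2 _ Fo.arrow inferInstance
  have hsum₁ : phi s₁ (Z (kernel (Fo.arrow ≫ p))) +
      phi s₁ (Z (cokernel (kernel.ι (Fo.arrow ≫ p)))) = phi s₁ (Z (F.obj i.castSucc)) := by
    rw [← map_add, ← hk3, hZFo]
  have hsum₂ : phi s₂ (Z (kernel (Fo.arrow ≫ p))) +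
      phi s₂ (Z (cokernel (kernel.ι (Fo.arrow ≫ p)))) = phi s₂ (Z (F.obj i.castSucc)) := by
    rw [← map_add, ← hl3, hZFo]
  have hK₁ : phi s₁ (Z (kernel (Fo.arrow ≫ p))) = 0 := le_antisymm hk1 (by linarith)
  have hK₂ : phi s₂ (Z (kernel (Fo.arrow ≫ p))) = 0 := le_antisymm hl1 (by linarith)
  have hKzero : Z (kernel (Fo.arrow ≫ p)) = 0 := eq_zero_of_phi s₁ s₂ hs₁₂ _ hK₁ hK₂
  have hKz : IsZero (kernel (Fo.arrow ≫ p)) := isZero_of_Z_eq_zero hZ hKzero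
  haveI hmonoψ : Mono (Fo.arrow ≫ p) :=
    Abelian.mono_of_kernel_ι_eq_zero _ (hKz.eq_of_src _ 0)
  have hadd := Z_add_of_mono hZ (Fo.arrow ≫ p)
  rw [hZFo] at hadd
  have hcok : Z (cokernel (Fo.arrow ≫ p)) = 0 := (left_eq_add.mp hadd)
  have hcokz : IsZero (cokernel (Fo.arrow ≫ p)) := isZero_of_Z_eq_zero hZ hcok
  haveI hepiψ : Epi (Fo.arrow ≫ p) :=
    Abelian.epi_of_cokernel_π_eq_zero _ (hcokz.eq_of_tgt _ 0)
  haveI : IsIso (Fo.arrow ≫ p) := isIso_of_mono_of_epi _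
  have hσ : (inv (Fo.arrow ≫ p) ≫ Fo.arrow) ≫ p = 𝟙 (F.obj i.castSucc) := by
    rw [Category.assoc]
    exact IsIso.inv_hom_id (Fo.arrow ≫ p)
  have spl : (ShortComplex.mk q p w).Splitting :=
    ShortComplex.Splitting.ofExactOfSection _ hse.exact (inv (Fo.arrow ≫ p) ≫ Fo.arrow) hσ
      hse.mono_f
  exact ⟨⟨spl⟩, ⟨spl.isoBinaryBiproduct⟩⟩

end StabNL
end

section
/- Let F : 𝒜 → ℬ be an exact functor between abelian categories. Assume: (i) every object of ℬ is noetherian; (ii) every object X of 𝒜 with F(X) ≅ 0 is a noetherian object of 𝒜; (iii) every object E of 𝒜 has a largest subobject killed by F, i.e. a subobject T₀ ⊆ E with F(T₀) ≅ 0 such that every subobject S ⊆ E with F(S) ≅ 0 satisfies S ⊆ T₀. Then every object of 𝒜 is noetherian. -/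
open CategoryTheory CategoryTheory.Limits

universe v₁ v₂ u₁ u₂

/-- Let `F : 𝒜 ⥤ ℬ` be an exact functor between abelian categories. If every object of `ℬ`
is noetherian, every object of `𝒜` killed by `F` is noetherian, and every object of `𝒜` has
a largest subobject killed by `F`, then every object of `𝒜` is noetherian. -/
theorem statement2
    {𝒜 : Type u₁} [Category.{v₁} 𝒜] [Abelian 𝒜]
    {ℬ : Type u₂} [Category.{v₂} ℬ] [Abelian ℬ]
    (F : 𝒜 ⥤ ℬ) [PreservesFiniteLimits F] [PreservesFiniteColimits F]
    (h₁ : ∀ Y : ℬ, IsNoetherianObject Y)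
    (h₂ : ∀ X : 𝒜, IsZero (F.obj X) → IsNoetherianObject X)
    (h₃ : ∀ E : 𝒜, ∃ T₀ : Subobject E, IsZero (F.obj (T₀ : 𝒜)) ∧
        ∀ S : Subobject E, IsZero (F.obj (S : 𝒜)) → S ≤ T₀) :
    ∀ X : 𝒜, IsNoetherianObject X := by
  intro X
  rw [isNoetherianObject_iff_monotone_chain_condition]
  intro f
  -- Step 1: the chain of images in `F.obj X` stabilizes at some `N`.
  let g : ℕ →o Subobject (F.obj X) :=
    { toFun := fun n => Subobject.mk (F.map (f n).arrow)
      monotone' := by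
        intro n m h
        exact Subobject.mk_le_mk_of_comm (F.map (Subobject.ofLE _ _ (f.monotone h)))
          (by rw [← F.map_comp, Subobject.ofLE_arrow]) }
  obtain ⟨N, hN⟩ :=
    ((isNoetherianObject_iff_monotone_chain_condition _).mp
      (h₁ (F.obj X))) g
  -- the quotient `Q = X / f N`
  set q : X ⟶ cokernel (f N).arrow := cokernel.π (f N).arrow with hq
  -- images of the chain in the quotient
  let u : ℕ → Subobject (cokernel (f N).arrow) := fun n => imageSubobject ((f n).arrow ≫ q)
  have humono : ∀ {n m : ℕ}, n ≤ m → u n ≤ u m := by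
    intro n m h
    have h1 : (f n).arrow ≫ q = Subobject.ofLE _ _ (f.monotone h) ≫ ((f m).arrow ≫ q) := by
      rw [← Category.assoc, Subobject.ofLE_arrow]
    calc u n = imageSubobject (Subobject.ofLE _ _ (f.monotone h) ≫ ((f m).arrow ≫ q)) := by
            simp only [u]; congr 1
      _ ≤ u m := imageSubobject_comp_le _ _
  -- the torsion subobject of the quotient
  obtain ⟨T₀, hTzero, hTmax⟩ := h₃ (cokernel (f N).arrow)
  -- for `n ≥ N` the image `u n` is killed by `F`...
  have hFzero : ∀ n, N ≤ n → F.map ((f n).arrow ≫ q) = 0 := by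
    intro n hn
    have hle : Subobject.mk (F.map (f n).arrow) ≤ Subobject.mk (F.map (f N).arrow) :=
      le_of_eq (hN n hn).symm
    have hcomm := Subobject.ofMkLEMk_comp hle
    rw [F.map_comp, ← hcomm, Category.assoc, ← F.map_comp, hq, cokernel.condition,
      F.map_zero, comp_zero]
  have huzero : ∀ n, N ≤ n → IsZero (F.obj ((u n : 𝒜))) := by
    intro n hn
    have himg : IsZero (F.obj (Limits.image ((f n).arrow ≫ q))) := by
      have he : F.map (factorThruImage ((f n).arrow ≫ q)) = 0 := by
        apply zero_of_comp_mono (F.map (Limits.image.ι ((f n).arrow ≫ q)))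
        rw [← F.map_comp, Limits.image.fac, hFzero n hn]
      rw [IsZero.iff_id_eq_zero, ← cancel_epi (F.map (factorThruImage ((f n).arrow ≫ q))),
        comp_zero, Category.comp_id, he]
    exact IsZero.of_iso himg (F.mapIso (imageSubobjectIso _))
  have hle : ∀ n, N ≤ n → u n ≤ T₀ := fun n hn => hTmax _ (huzero n hn)
  -- chain of subobjects of the (noetherian) torsion subobject
  have hTnoeth := h₂ _ hTzero
  let w : ∀ n, N ≤ n → ((u n : 𝒜) ⟶ (T₀ : 𝒜)) := fun n hn => Subobject.ofLE _ _ (hle n hn)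
  have hwarrow : ∀ n (hn : N ≤ n), w n hn ≫ T₀.arrow = (u n).arrow := fun n hn =>
    Subobject.ofLE_arrow _
  have hwmono : ∀ n (hn : N ≤ n), Mono (w n hn) := by
    intro n hn
    have : Mono (w n hn ≫ T₀.arrow) := by rw [hwarrow n hn]; infer_instance
    exact mono_of_mono _ T₀.arrow
  have hv : ∀ (a b : ℕ) (ha : N ≤ a) (hb : N ≤ b),
      haveI := hwmono a ha; haveI := hwmono b hb
      Subobject.mk (w a ha) ≤ Subobject.mk (w b hb) → u a ≤ u b := by
    intro a b ha hb h
    haveI := hwmono a ha; haveI := hwmono b hb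
    refine Subobject.le_of_comm (Subobject.ofMkLEMk _ _ h) ?_
    rw [← hwarrow b hb, ← Category.assoc, Subobject.ofMkLEMk_comp, hwarrow a ha]
  let v : ℕ →o Subobject (T₀ : 𝒜) :=
    { toFun := fun n =>
        haveI := hwmono (N + n) (Nat.le_add_right N n)
        Subobject.mk (w (N + n) (Nat.le_add_right N n))
      monotone' := by
        intro n m h
        haveI := hwmono (N + n) (Nat.le_add_right N n)
        haveI := hwmono (N + m) (Nat.le_add_right N m)
        refine Subobject.mk_le_mk_of_comm
          (Subobject.ofLE _ _ (humono (Nat.add_le_add_left h N))) ?_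
        rw [← cancel_mono T₀.arrow, Category.assoc, hwarrow (N + m) (Nat.le_add_right N m),
          hwarrow (N + n) (Nat.le_add_right N n), Subobject.ofLE_arrow] }
  obtain ⟨M, hM⟩ :=
    ((isNoetherianObject_iff_monotone_chain_condition _).mp
      hTnoeth) v
  -- key comparison: if the image of `f a` in the quotient is contained in that of `f b`,
  -- then `f a ≤ f b` (for `b ≥ N`).
  have key : ∀ a b : ℕ, N ≤ b → u a ≤ u b → f a ≤ f b := by
    intro a b hb hub
    have hzero : (f N).arrow ≫ cokernel.π (f b).arrow = 0 := by
      rw [← Subobject.ofLE_arrow (f.monotone hb), Category.assoc, cokernel.condition, comp_zero]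
    set d : cokernel (f N).arrow ⟶ cokernel (f b).arrow :=
      cokernel.desc _ (cokernel.π (f b).arrow) hzero with hd
    have hqd : q ≫ d = cokernel.π (f b).arrow := by rw [hq, hd]; simp
    have hubd : (u b).arrow ≫ d = 0 := by
      rw [← cancel_epi (factorThruImageSubobject ((f b).arrow ≫ q)), comp_zero,
        ← Category.assoc, imageSubobject_arrow_comp, Category.assoc, hqd, cokernel.condition]
    have hfa : (f a).arrow ≫ cokernel.π (f b).arrow = 0 := by
      rw [← hqd, ← Category.assoc, ← imageSubobject_arrow_comp ((f a).arrow ≫ q),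
        ← Subobject.ofLE_arrow hub]
      rw [Category.assoc, Category.assoc, hubd, comp_zero, comp_zero]
    exact Subobject.le_of_comm (Abelian.monoLift (f b).arrow (f a).arrow hfa)
      (Abelian.monoLift_comp _ _ _)
  -- conclusion
  refine ⟨N + M, fun m hm => ?_⟩
  refine le_antisymm (f.monotone hm) (key m (N + M) (Nat.le_add_right N M) ?_)
  have hmN : N ≤ m := le_trans (Nat.le_add_right N M) hm
  have hMm : M ≤ m - N := by omega
  have hvm := (hM (m - N) hMm).symm
  have := hv (N + (m - N)) (N + M) (Nat.le_add_right _ _) (Nat.le_add_right _ _)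
    (le_of_eq hvm)
  have hidx : N + (m - N) = m := by omega
  rw [hidx] at this
  exact this
end

section
/- Let C be a discrete valuation ring with uniformizer π, let m ≥ 1 be an integer, and let M be a module over the quotient ring C/(π^m). Then M is flat over C/(π^m) if and only if for every 1 ≤ k ≤ m−1 the map x ↦ π^k·x induces an isomorphism M/πM ≅ π^k M / π^{k+1} M (equivalently, multiplication by π induces isomorphisms M/πM ≅ πM/π²M ≅ … ≅ π^{m−1}M, noting π^m M = 0). -/
namespace DVRFlatNL

set_option linter.unusedSectionVars false

section LemA

variable {R : Type*} [CommRing R] {M : Type*} [AddCommGroup M] [Module R M]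

open TensorProduct LinearMap

lemma lemA (a b : R) (hab : ∀ r : R, r * a = 0 ↔ r ∈ Ideal.span {b}) :
    Function.Injective (LinearMap.rTensor M (Ideal.span {a}).subtype) ↔
      ∀ x : M, a • x = 0 → x ∈ (Ideal.span {b} : Ideal R) • (⊤ : Submodule R M) := by
  have ha : a ∈ Ideal.span {a} := Ideal.subset_span rfl
  set f : R →ₗ[R] (Ideal.span {a} : Ideal R) :=
    LinearMap.toSpanSingleton R (Ideal.span {a}) ⟨a, ha⟩ with hf
  have hfapp : ∀ r : R, ((f r : Ideal.span {a}) : R) = r * a := by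
    intro r
    simp [hf, LinearMap.toSpanSingleton_apply, smul_eq_mul]
  have hker : ∀ r : R, r ∈ Ideal.span {b} → f r = 0 := by
    intro r hr
    ext
    rw [hfapp]
    exact (hab r).mpr hr
  set e0 : (R ⧸ Ideal.span {b}) →ₗ[R] (Ideal.span {a} : Ideal R) :=
    Submodule.liftQ (Ideal.span {b}) f (fun r hr => hker r hr) with he0
  have he0mk : ∀ r : R, e0 (Ideal.Quotient.mk (Ideal.span {b}) r) = f r := fun r => rfl
  have he0inj : Function.Injective e0 := by
    rw [← LinearMap.ker_eq_bot]
    rw [he0]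
    apply Submodule.ker_liftQ_eq_bot
    intro r hr
    rw [LinearMap.mem_ker] at hr
    have : ((f r : Ideal.span {a}) : R) = 0 := by rw [hr]; rfl
    rw [hfapp] at this
    exact (hab r).mp this
  have he0surj : Function.Surjective e0 := by
    rintro ⟨y, hy⟩
    obtain ⟨r, hr⟩ := Ideal.mem_span_singleton'.mp hy
    refine ⟨Ideal.Quotient.mk _ r, ?_⟩
    rw [he0mk]
    ext
    rw [hfapp, hr]
  set e : (R ⧸ Ideal.span {b}) ≃ₗ[R] (Ideal.span {a} : Ideal R) :=
    LinearEquiv.ofBijective e0 ⟨he0inj, he0surj⟩ with he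
  set g : ((Ideal.span {a} : Ideal R) ⊗[R] M) ≃ₗ[R]
      (M ⧸ ((Ideal.span {b} : Ideal R) • (⊤ : Submodule R M))) :=
    (LinearEquiv.rTensor M e).symm ≪≫ₗ quotTensorEquivQuotSMul M (Ideal.span {b}) with hg
  have hesymm : e.symm ⟨a, ha⟩ = Ideal.Quotient.mk (Ideal.span {b}) 1 := by
    rw [LinearEquiv.symm_apply_eq]
    have h1 : e (Ideal.Quotient.mk (Ideal.span {b}) 1) = f 1 := rfl
    rw [h1]
    ext
    rw [hfapp, one_mul]
  have hgkey : ∀ x : M, g ((⟨a, ha⟩ : Ideal.span {a}) ⊗ₜ[R] x)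
      = Submodule.Quotient.mk x := by
    intro x
    rw [hg]
    simp only [LinearEquiv.trans_apply]
    have h1 : (LinearEquiv.rTensor M e).symm ((⟨a, ha⟩ : Ideal.span {a}) ⊗ₜ[R] x)
        = (Ideal.Quotient.mk (Ideal.span {b}) 1) ⊗ₜ[R] x := by
      show (TensorProduct.congr e (LinearEquiv.refl R M)).symm _ = _
      rw [TensorProduct.congr_symm_tmul, hesymm]
      simp
    rw [h1, quotTensorEquivQuotSMul_mk_tmul, one_smul]
  have hall : ∀ z : (Ideal.span {a} : Ideal R) ⊗[R] M,
      ∃ x : M, z = (⟨a, ha⟩ : Ideal.span {a}) ⊗ₜ[R] x := by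
    intro z
    obtain ⟨x, hx⟩ := Submodule.Quotient.mk_surjective _ (g z)
    exact ⟨x, g.injective (by rw [hgkey, hx])⟩
  have hrT : ∀ x : M, LinearMap.rTensor M (Ideal.span {a}).subtype
      ((⟨a, ha⟩ : Ideal.span {a}) ⊗ₜ[R] x) = a ⊗ₜ[R] x := by
    intro x
    rw [LinearMap.rTensor_tmul]
    rfl
  have htmul_zero : ∀ x : M, a • x = 0 ↔ (a ⊗ₜ[R] x : R ⊗[R] M) = 0 := by
    intro x
    constructor
    · intro h
      have : (TensorProduct.lid R M) (a ⊗ₜ[R] x) = 0 := by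
        rw [TensorProduct.lid_tmul, h]
      exact (LinearEquiv.map_eq_zero_iff _).mp this
    · intro h
      have := congrArg (TensorProduct.lid R M) h
      rw [TensorProduct.lid_tmul, map_zero] at this
      exact this
  constructor
  · intro hinj x hax
    have h0 : LinearMap.rTensor M (Ideal.span {a}).subtype
        ((⟨a, ha⟩ : Ideal.span {a}) ⊗ₜ[R] x) = 0 := by
      rw [hrT]
      exact (htmul_zero x).mp hax
    have hz : ((⟨a, ha⟩ : Ideal.span {a}) ⊗ₜ[R] x) = 0 := by
      apply hinj
      rw [h0, map_zero]
    have := congrArg g hz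
    rw [hgkey, map_zero] at this
    exact (Submodule.Quotient.mk_eq_zero _).mp this
  · intro h
    rw [injective_iff_map_eq_zero]
    intro z hz
    obtain ⟨x, rfl⟩ := hall z
    rw [hrT] at hz
    have hax : a • x = 0 := (htmul_zero x).mpr hz
    have := h x hax
    rw [← Submodule.Quotient.mk_eq_zero] at this
    rw [← hgkey x] at this
    exact g.map_eq_zero_iff.mp this

end LemA

section

variable (C : Type*) [CommRing C] (π : C) (m : ℕ)
  (M : Type*) [AddCommGroup M] [Module (C ⧸ Ideal.span {π ^ m}) M]

/-- Multiplication by `π^k` on a module over `C/(π^m)`. -/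
noncomputable def piSmul (k : ℕ) : M →ₗ[C ⧸ Ideal.span {π ^ m}] M :=
  LinearMap.lsmul _ M ((Ideal.Quotient.mk (Ideal.span {π ^ m}) π) ^ k)

/-- The submodule `π^k M`. -/
noncomputable def piPow (k : ℕ) : Submodule (C ⧸ Ideal.span {π ^ m}) M :=
  LinearMap.range (piSmul C π m M k)

/-- The map `M → π^k M / π^{k+1} M` induced by `x ↦ π^k • x`. -/
noncomputable def inducedMap (k : ℕ) :
    M →ₗ[C ⧸ Ideal.span {π ^ m}]
      (piPow C π m M k ⧸
        Submodule.comap (piPow C π m M k).subtype (piPow C π m M (k + 1))) :=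
  (Submodule.mkQ _).comp (LinearMap.rangeRestrict (piSmul C π m M k))

end

section Helpers

variable {C : Type*} [CommRing C] {π : C} {m : ℕ}
  {M : Type*} [AddCommGroup M] [Module (C ⧸ Ideal.span {π ^ m}) M]

local notation "p" => Ideal.Quotient.mk (Ideal.span {π ^ m}) π

lemma mem_piPow {k : ℕ} {x : M} :
    x ∈ piPow C π m M k ↔ ∃ y : M, (p ^ k) • y = x := by
  simp [piPow, piSmul, LinearMap.mem_range]

lemma piPow_eq_smul_top (k : ℕ) :
    (Ideal.span {(p : C ⧸ Ideal.span {π ^ m}) ^ k} : Ideal (C ⧸ Ideal.span {π ^ m}))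
      • (⊤ : Submodule (C ⧸ Ideal.span {π ^ m}) M) = piPow C π m M k := by
  apply le_antisymm
  · rw [Submodule.smul_le]
    intro r hr x _
    obtain ⟨s, rfl⟩ := Ideal.mem_span_singleton'.mp hr
    rw [mem_piPow]
    exact ⟨s • x, by rw [smul_smul, mul_comm]⟩
  · intro x hx
    obtain ⟨y, rfl⟩ := mem_piPow.mp hx
    exact Submodule.smul_mem_smul (Ideal.subset_span rfl) trivial

lemma mem_ker_inducedMap {k : ℕ} {x : M} :
    x ∈ LinearMap.ker (inducedMap C π m M k) ↔ (p ^ k) • x ∈ piPow C π m M (k + 1) := by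
  simp only [inducedMap, LinearMap.mem_ker, LinearMap.comp_apply, Submodule.mkQ_apply,
    Submodule.Quotient.mk_eq_zero, Submodule.mem_comap]
  constructor
  · intro h
    exact (Submodule.Quotient.mk_eq_zero (Submodule.comap (piPow C π m M k).subtype (piPow C π m M (k + 1))) (x := (piSmul C π m M k).rangeRestrict x)).mp h
  · intro h
    exact (Submodule.Quotient.mk_eq_zero _).mpr h

lemma surjective_inducedMap (k : ℕ) :
    Function.Surjective (inducedMap C π m M k) :=
  (Submodule.mkQ_surjective _).comp (LinearMap.surjective_rangeRestrict _)

end Helpers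

section DVR

variable {C : Type*} [CommRing C] [IsDomain C] [IsDiscreteValuationRing C]
  {π : C} (hπ : Irreducible π) {m : ℕ}

local notation "p" => Ideal.Quotient.mk (Ideal.span {π ^ m}) π

include hπ

lemma ann_pow (n : ℕ) (hn : n ≤ m) :
    ∀ r : C ⧸ Ideal.span {π ^ m},
      r * (p ^ n) = 0 ↔ r ∈ Ideal.span {(p : C ⧸ Ideal.span {π ^ m}) ^ (m - n)} := by
  intro r
  obtain ⟨s, rfl⟩ := Ideal.Quotient.mk_surjective r
  have hpow : ∀ j : ℕ, (p ^ j : C ⧸ Ideal.span {π ^ m}) = Ideal.Quotient.mk _ (π ^ j) := by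
    intro j; rw [map_pow]
  rw [hpow, hpow, ← map_mul, Ideal.Quotient.eq_zero_iff_mem, Ideal.mem_span_singleton,
    Ideal.mem_span_singleton']
  constructor
  · rintro ⟨t, ht⟩
    refine ⟨Ideal.Quotient.mk _ t, ?_⟩
    rw [← map_mul]
    congr 1
    have hcancel : t * π ^ (m - n) * π ^ n = s * π ^ n := by
      rw [mul_assoc, ← pow_add, Nat.sub_add_cancel hn]
      linear_combination -ht
    exact mul_right_cancel₀ (pow_ne_zero n hπ.ne_zero) hcancel
  · rintro ⟨t, ht⟩
    obtain ⟨u, rfl⟩ := Ideal.Quotient.mk_surjective t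
    rw [← map_mul] at ht
    rw [Ideal.Quotient.eq, Ideal.mem_span_singleton] at ht
    obtain ⟨v, hv⟩ := ht
    have hs : s = u * π ^ (m - n) - v * π ^ m := by linear_combination -hv
    have h1 : π ^ (m - n) * π ^ n = π ^ m := by
      rw [← pow_add, Nat.sub_add_cancel hn]
    refine ⟨u - v * π ^ n, ?_⟩
    calc s * π ^ n = (u * π ^ (m - n) - v * π ^ m) * π ^ n := by rw [hs]
      _ = π ^ m * (u - v * π ^ n) := by rw [← h1]; ring

lemma ideal_classification (J : Ideal (C ⧸ Ideal.span {π ^ m})) :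
    ∃ n ≤ m, J = Ideal.span {(p : C ⧸ Ideal.span {π ^ m}) ^ n} := by
  have hpm : (p : C ⧸ Ideal.span {π ^ m}) ^ m = 0 := by
    rw [← map_pow, Ideal.Quotient.eq_zero_iff_mem]
    exact Ideal.subset_span rfl
  set J' := Ideal.comap (Ideal.Quotient.mk (Ideal.span {π ^ m})) J with hJ'
  have hne : J' ≠ ⊥ := by
    intro h
    have hmem : π ^ m ∈ J' := by
      rw [hJ', Ideal.mem_comap, map_pow, hpm]
      exact J.zero_mem
    rw [h] at hmem
    exact pow_ne_zero m hπ.ne_zero (Submodule.mem_bot _ |>.mp hmem)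
  obtain ⟨n, hn⟩ := IsDiscreteValuationRing.ideal_eq_span_pow_irreducible hne hπ
  have hJ : J = Ideal.span {(p : C ⧸ Ideal.span {π ^ m}) ^ n} := by
    have := Ideal.map_comap_of_surjective _ Ideal.Quotient.mk_surjective J
    rw [← this, ← hJ', hn, Ideal.map_span, Set.image_singleton, map_pow]
  rcases le_or_gt n m with h | h
  · exact ⟨n, h, hJ⟩
  · refine ⟨m, le_refl m, ?_⟩
    rw [hJ, hpm]
    have : (p : C ⧸ Ideal.span {π ^ m}) ^ n = 0 := by
      have : n = m + (n - m) := by omega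
      rw [this, pow_add, hpm, zero_mul]
    rw [this]

variable {M : Type*} [AddCommGroup M] [Module (C ⧸ Ideal.span {π ^ m}) M]

/-- Flatness criterion over `C/(π^m)`. -/
lemma flat_iff_cond :
    Module.Flat (C ⧸ Ideal.span {π ^ m}) M ↔
      ∀ n ≤ m, ∀ x : M, (p ^ n) • x = 0 → x ∈ piPow C π m M (m - n) := by
  rw [Module.Flat.iff_rTensor_injective']
  constructor
  · intro h n hn x hx
    have := (lemA ((p : C ⧸ Ideal.span {π ^ m}) ^ n)
      ((p : C ⧸ Ideal.span {π ^ m}) ^ (m - n)) (ann_pow hπ n hn)).mp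
      (h _) x hx
    rwa [piPow_eq_smul_top] at this
  · intro h J
    obtain ⟨n, hn, rfl⟩ := ideal_classification hπ J
    refine (lemA ((p : C ⧸ Ideal.span {π ^ m}) ^ n)
      ((p : C ⧸ Ideal.span {π ^ m}) ^ (m - n)) (ann_pow hπ n hn)).mpr ?_
    intro x hx
    rw [piPow_eq_smul_top]
    exact h n hn x hx

/-- Downward induction: the statement conditions imply the flatness conditions. -/
lemma aux_downward (hm : 1 ≤ m)
    (hS : ∀ k, 1 ≤ k → k ≤ m - 1 →
      ∀ x : M, (p ^ k) • x ∈ piPow C π m M (k + 1) → x ∈ piPow C π m M 1) :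
    ∀ d n, 1 ≤ n → n + d = m - 1 →
      ∀ x : M, (p ^ n) • x = 0 → x ∈ piPow C π m M (m - n) := by
  intro d
  induction d with
  | zero =>
    intro n h1 h2 x hx
    have hn : n = m - 1 := by omega
    have hmem : (p ^ n) • x ∈ piPow C π m M (n + 1) := by
      rw [hx, mem_piPow]
      exact ⟨0, smul_zero _⟩
    have := hS n h1 (by omega) x hmem
    have hmn : m - n = 1 := by omega
    rwa [hmn]
  | succ d ih =>
    intro n h1 h2 x hx
    have hmem : (p ^ n) • x ∈ piPow C π m M (n + 1) := by
      rw [hx, mem_piPow]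
      exact ⟨0, smul_zero _⟩
    obtain ⟨y, hy⟩ := mem_piPow.mp (hS n h1 (by omega) x hmem)
    rw [pow_one] at hy
    have hy' : (p ^ (n + 1)) • y = 0 := by
      rw [pow_succ, mul_smul, hy, hx]
    obtain ⟨z, hz⟩ := mem_piPow.mp (ih (n + 1) (by omega) (by omega) y hy')
    rw [mem_piPow]
    refine ⟨z, ?_⟩
    have harith : m - n = (m - (n + 1)) + 1 := by omega
    rw [harith, pow_succ', mul_smul, hz, hy]

theorem statement7' (hm : 1 ≤ m)
    (M : Type*) [AddCommGroup M] [Module (C ⧸ Ideal.span {π ^ m}) M] :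
    Module.Flat (C ⧸ Ideal.span {π ^ m}) M ↔
      ∀ k : ℕ, 1 ≤ k → k ≤ m - 1 →
        Function.Surjective (inducedMap C π m M k) ∧
        LinearMap.ker (inducedMap C π m M k) = piPow C π m M 1 := by
  rw [flat_iff_cond hπ]
  constructor
  · intro hC k hk1 hk2
    refine ⟨surjective_inducedMap k, ?_⟩
    ext x
    rw [mem_ker_inducedMap]
    simp only [mem_piPow]
    constructor
    · rintro ⟨y, hy⟩
      -- p^k • (x - p • y) = 0
      have hzero : (p ^ k) • (x - (p ^ 1) • y) = 0 := by
        rw [smul_sub, ← mul_smul, ← pow_add, hy, sub_self]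
      have hin := hC k (by omega) _ hzero
      obtain ⟨z, hz⟩ := mem_piPow.mp hin
      refine ⟨(p ^ (m - k - 1)) • z + y, ?_⟩
      rw [smul_add, ← mul_smul, ← pow_add]
      have harith : 1 + (m - k - 1) = m - k := by omega
      rw [harith, hz]
      abel
    · rintro ⟨y, hy⟩
      refine ⟨y, ?_⟩
      rw [← hy, ← mul_smul, ← pow_add]
  · intro hS n hn x hx
    have hS' : ∀ k, 1 ≤ k → k ≤ m - 1 →
        ∀ z : M, (p ^ k) • z ∈ piPow C π m M (k + 1) → z ∈ piPow C π m M 1 := by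
      intro k hk1 hk2 z hz
      have := (hS k hk1 hk2).2
      rw [← this, mem_ker_inducedMap]
      exact hz
    rcases Nat.eq_zero_or_pos n with h0 | hpos
    · subst h0
      rw [pow_zero, one_smul] at hx
      subst hx
      exact (piPow C π m M (m - 0)).zero_mem
    rcases eq_or_lt_of_le hn with hnm | hlt
    · subst hnm
      rw [Nat.sub_self, mem_piPow]
      exact ⟨x, by rw [pow_zero, one_smul]⟩
    · exact aux_downward hπ hm hS' (m - 1 - n) n hpos (by omega) x hx

end DVR

/-- A module `M` over `C/(π^m)` (`C` a DVR with uniformizer `π`, `m ≥ 1`) is flat iff for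
every `1 ≤ k ≤ m-1` the map `x ↦ π^k • x` induces an isomorphism
`M/πM ≅ π^k M / π^{k+1} M`, i.e. `M → π^k M / π^{k+1} M` is surjective with kernel `πM`. -/
theorem statement7 (C : Type*) [CommRing C] [IsDomain C] [IsDiscreteValuationRing C]
    (π : C) (hπ : Irreducible π) (m : ℕ) (hm : 1 ≤ m)
    (M : Type*) [AddCommGroup M] [Module (C ⧸ Ideal.span {π ^ m}) M] :
    Module.Flat (C ⧸ Ideal.span {π ^ m}) M ↔
      ∀ k : ℕ, 1 ≤ k → k ≤ m - 1 →
        Function.Surjective (inducedMap C π m M k) ∧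
        LinearMap.ker (inducedMap C π m M k) = piPow C π m M 1 := by
  exact statement7' hπ hm M

end DVRFlatNL
end
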